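/- Let d ≥ 2 and n ≥ 2, and let G = G^d_{1,n} = ⟨a, t₁, …, t_d ∣ t_i⁻¹ a t_i = aⁿ, i = 1,…,d⟩. For every k > 2, the group G^k_{1,n} = ⟨b, s₁, …, s_k ∣ s_j⁻¹ b s_j = bⁿ, j = 1,…,k⟩ embeds as a subgroup of finite index in G²_{1,n}. -/

import Mathlib

def GBSRels (k : ℕ) (A B : Fin k → ℤ) : Set (FreeGroup (Option (Fin k))) :=
  ⋃ i : Fin k,
    {(FreeGroup.of (some i))⁻¹ * FreeGroup.of none ^ (A i) * FreeGroup.of (some i) *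
      (FreeGroup.of none ^ (B i))⁻¹}

abbrev GBSBouquet (k : ℕ) (A B : Fin k → ℤ) : Type := PresentedGroup (GBSRels k A B)

/-- `G^d_{1,n}`: the GBS group which is a bouquet of `d` circles all labelled `(1, n)`. -/
abbrev GBSOneN (d n : ℕ) : Type :=
  GBSBouquet d (fun _ => (1 : ℤ)) (fun _ => (n : ℤ))

namespace GBSAux

/-! ### Generic conjugation lemmas -/

section Generic

variable {G : Type*} [Group G] {x y : G} {n : ℕ}

lemma conj_in (x y : G) (e : ℕ) : (x⁻¹ * y * x) ^ e = x⁻¹ * y ^ e * x := by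
  induction e with
  | zero => simp
  | succ m ih => rw [pow_succ, ih, pow_succ]; group

lemma conj_out (x y : G) (e : ℕ) : (x * y * x⁻¹) ^ e = x * y ^ e * x⁻¹ := by
  induction e with
  | zero => simp
  | succ m ih => rw [pow_succ, ih, pow_succ]; group

lemma conj_pow_c (h : x⁻¹ * y * x = y ^ n) (e : ℕ) : x⁻¹ * y ^ e * x = y ^ (n * e) := by
  rw [← conj_in, h, ← pow_mul]

lemma conj_pow_d (h : x⁻¹ * y * x = y ^ n) (e : ℕ) : x * y ^ (n * e) * x⁻¹ = y ^ e := by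
  rw [pow_mul, ← h, conj_in]; group

lemma tower_up (h : x⁻¹ * y * x = y ^ n) (m e : ℕ) :
    (x ^ m)⁻¹ * y ^ e * x ^ m = y ^ (n ^ m * e) := by
  induction m with
  | zero => simp
  | succ m ih =>
      have h2 : (x ^ (m+1))⁻¹ * y ^ e * x ^ (m+1)
          = x⁻¹ * ((x ^ m)⁻¹ * y ^ e * x ^ m) * x := by group
      rw [h2, ih, conj_pow_c h, show n * (n ^ m * e) = n ^ (m+1) * e by ring]

lemma tower_down (h : x⁻¹ * y * x = y ^ n) (m e : ℕ) :
    x ^ m * y ^ (n ^ m * e) * (x ^ m)⁻¹ = y ^ e := by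
  induction m with
  | zero => simp
  | succ m ih =>
      have h2 : x ^ (m+1) * y ^ (n ^ (m+1) * e) * (x ^ (m+1))⁻¹
          = x ^ m * (x * y ^ (n * (n ^ m * e)) * x⁻¹) * (x ^ m)⁻¹ := by
        rw [show n ^ (m+1) * e = n * (n ^ m * e) by ring]; group
      rw [h2, conj_pow_d h, ih]

lemma tower_down' (h : x⁻¹ * y * x = y ^ n) (m : ℕ) :
    x ^ m * y ^ (n ^ m) * (x ^ m)⁻¹ = y := by
  have := tower_down h m 1
  simpa using this

end Generic

/-! ### The defining relations of `GBSOneN` -/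

lemma gbs_rel {d m : ℕ} (j : Fin d) :
    (PresentedGroup.of (some j) : GBSOneN d m)⁻¹ * PresentedGroup.of none *
      PresentedGroup.of (some j) = PresentedGroup.of none ^ m := by
  set rels := GBSRels d (fun _ => (1 : ℤ)) (fun _ => (m : ℤ)) with hrels
  set r : FreeGroup (Option (Fin d)) :=
    (FreeGroup.of (some j))⁻¹ * FreeGroup.of none ^ ((1 : ℤ)) * FreeGroup.of (some j) *
      (FreeGroup.of none ^ ((m : ℤ)))⁻¹ with hr
  have hmem : r ∈ rels := by
    rw [hrels, GBSRels, Set.mem_iUnion]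
    exact ⟨j, rfl⟩
  have h1 : PresentedGroup.mk rels r = 1 :=
    (QuotientGroup.eq_one_iff r).2 (Subgroup.subset_normalClosure hmem)
  rw [hr] at h1
  simp only [map_mul, map_inv, map_zpow, zpow_one] at h1
  have h2 : ∀ x : Option (Fin d),
      PresentedGroup.mk rels (FreeGroup.of x) = PresentedGroup.of x := fun _ => rfl
  rw [h2, h2] at h1
  have h3 := mul_inv_eq_one.mp h1
  rw [← zpow_natCast (PresentedGroup.of (none : Option (Fin d))) m]
  exact h3

end GBSAux

namespace GBSAux

open PresentedGroup

section Main

variable (n c : ℕ)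

/-! ### Notation for the ambient group `G² = GBSOneN 2 n` -/

def tG : GBSOneN 2 n := PresentedGroup.of (some 0)

def uG : GBSOneN 2 n := PresentedGroup.of (some 1)

def aG : GBSOneN 2 n := PresentedGroup.of none

lemma rel_t : (tG n)⁻¹ * aG n * tG n = aG n ^ n := gbs_rel 0

lemma rel_u : (uG n)⁻¹ * aG n * uG n = aG n ^ n := gbs_rel 1

/-! ### The images of the generators of `G^k` in `G²` -/

def BG : GBSOneN 2 n := tG n ^ c * aG n * (tG n ^ c)⁻¹

def uu (i : ℕ) : GBSOneN 2 n := tG n ^ i * uG n * (tG n ^ i)⁻¹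

def σG : GBSOneN 2 n := uu n c

def SS (i : ℕ) : GBSOneN 2 n := σG n c ^ (c - i) * uu n i * (σG n c ^ (c - i))⁻¹

def TT : GBSOneN 2 n := tG n ^ (c + 1) * (σG n c ^ c)⁻¹

lemma sigma_conj : (σG n c)⁻¹ * BG n c * σG n c = BG n c ^ n := by
  have h : (σG n c)⁻¹ * BG n c * σG n c
      = tG n ^ c * ((uG n)⁻¹ * aG n * uG n) * (tG n ^ c)⁻¹ := by
    unfold σG uu BG; group
  rw [h, rel_u, ← conj_out]
  rfl

lemma Bpow (m : ℕ) (hm : m ≤ c) :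
    BG n c ^ n ^ m = tG n ^ (c - m) * aG n * (tG n ^ (c - m))⁻¹ := by
  have h1 : BG n c ^ n ^ m = tG n ^ c * aG n ^ n ^ m * (tG n ^ c)⁻¹ := by
    show (tG n ^ c * aG n * (tG n ^ c)⁻¹) ^ n ^ m = _
    exact conj_out _ _ _
  have hc : c = (c - m) + m := (Nat.sub_add_cancel hm).symm
  have h2 : tG n ^ c * aG n ^ n ^ m * (tG n ^ c)⁻¹
      = tG n ^ (c - m) * (tG n ^ m * aG n ^ n ^ m * (tG n ^ m)⁻¹) * (tG n ^ (c - m))⁻¹ := by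
    conv_lhs => rw [hc]
    rw [pow_add]; group
  rw [h1, h2, tower_down' (rel_t n) m]

lemma a_eq_Bpow : aG n = BG n c ^ n ^ c := by
  rw [Bpow n c c le_rfl]
  simp

lemma SS_conj (i : ℕ) (hi : i ≤ c) : (SS n c i)⁻¹ * BG n c * SS n c i = BG n c ^ n := by
  set m := c - i with hm
  have hcm : c - m = i := Nat.sub_sub_self hi
  have step1 : (SS n c i)⁻¹ * BG n c * SS n c i
      = σG n c ^ m * ((uu n i)⁻¹ * ((σG n c ^ m)⁻¹ * BG n c * σG n c ^ m) * uu n i)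
        * (σG n c ^ m)⁻¹ := by
    rw [SS, ← hm]; group
  have h2 : (σG n c ^ m)⁻¹ * BG n c * σG n c ^ m = BG n c ^ (n ^ m) := by
    have := tower_up (sigma_conj n c) m 1
    simpa using this
  have h3 : BG n c ^ (n ^ m) = tG n ^ i * aG n * (tG n ^ i)⁻¹ := by
    rw [Bpow n c m (by omega), hcm]
  have h4 : (uu n i)⁻¹ * (tG n ^ i * aG n * (tG n ^ i)⁻¹) * uu n i
      = tG n ^ i * ((uG n)⁻¹ * aG n * uG n) * (tG n ^ i)⁻¹ := by
    rw [uu]; group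
  have h5 : tG n ^ i * aG n ^ n * (tG n ^ i)⁻¹ = (BG n c ^ n ^ m) ^ n := by
    rw [h3]; exact (conj_out _ _ _).symm
  rw [step1, h2, h3, h4, rel_u, h5, ← pow_mul]
  exact tower_down (sigma_conj n c) m n

lemma TT_conj : (TT n c)⁻¹ * BG n c * TT n c = BG n c ^ n := by
  have step1 : (TT n c)⁻¹ * BG n c * TT n c
      = σG n c ^ c * ((tG n ^ (c+1))⁻¹ * BG n c * tG n ^ (c+1)) * (σG n c ^ c)⁻¹ := by
    rw [TT]; group
  have h2 : (tG n ^ (c+1))⁻¹ * BG n c * tG n ^ (c+1)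
      = (tG n)⁻¹ * aG n * tG n := by
    rw [BG]; group
  have h3 : aG n ^ n = BG n c ^ (n ^ c * n) := by
    rw [a_eq_Bpow n c, ← pow_mul]
  rw [step1, h2, rel_t, h3, tower_down (sigma_conj n c) c n]

/-! ### The homomorphism `φ : G^(c+2) → G²` -/

def φf : Option (Fin (c + 2)) → GBSOneN 2 n
  | none => BG n c
  | some j => if (j : ℕ) ≤ c then SS n c j else TT n c

lemma φ_rels : ∀ r ∈ GBSRels (c + 2) (fun _ => (1 : ℤ)) (fun _ => ((n : ℕ) : ℤ)),
    FreeGroup.lift (φf n c) r = 1 := by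
  intro r hr
  rw [GBSRels, Set.mem_iUnion] at hr
  obtain ⟨j, hj⟩ := hr
  rw [Set.mem_singleton_iff] at hj
  subst hj
  simp only [map_mul, map_inv, map_zpow, map_pow, FreeGroup.lift_apply_of, zpow_one, zpow_natCast]
  have hnone : φf n c none = BG n c := rfl
  by_cases h : (j : ℕ) ≤ c
  · have hs : φf n c (some j) = SS n c j := by simp [φf, h]
    rw [hs, hnone, SS_conj n c j h]
    simp
  · have hs : φf n c (some j) = TT n c := by simp [φf, h]
    rw [hs, hnone, TT_conj n c]
    simp

def φH : GBSOneN (c + 2) n →* GBSOneN 2 n := PresentedGroup.toGroup (φ_rels n c)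

/-! ### Notation for `G^(c+2)` -/

def bK : GBSOneN (c + 2) n := PresentedGroup.of none

def sK (j : Fin (c + 2)) : GBSOneN (c + 2) n := PresentedGroup.of (some j)

lemma rel_sK (j : Fin (c + 2)) : (sK n c j)⁻¹ * bK n c * sK n c j = bK n c ^ n := gbs_rel j

def sTop : GBSOneN (c + 2) n := sK n c ⟨c, by omega⟩

def sLast : GBSOneN (c + 2) n := sK n c ⟨c + 1, by omega⟩

lemma rel_sTop : (sTop n c)⁻¹ * bK n c * sTop n c = bK n c ^ n := rel_sK n c _

lemma rel_sLast : (sLast n c)⁻¹ * bK n c * sLast n c = bK n c ^ n := rel_sK n c _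

lemma φ_b : φH n c (bK n c) = BG n c := by
  rw [φH, bK]
  exact PresentedGroup.toGroup.of _

lemma φ_s (j : Fin (c + 2)) : φH n c (sK n c j) = φf n c (some j) := by
  rw [φH, sK]
  exact PresentedGroup.toGroup.of _

lemma φ_s_le (j : Fin (c + 2)) (h : (j : ℕ) ≤ c) : φH n c (sK n c j) = SS n c j := by
  rw [φ_s]; simp [φf, h]

lemma φ_sTop : φH n c (sTop n c) = σG n c := by
  unfold sTop
  rw [φ_s_le n c _ (by simp)]
  show SS n c c = σG n c
  rw [SS, Nat.sub_self]
  simp only [pow_zero, one_mul, inv_one, mul_one]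
  rfl

lemma φ_sLast : φH n c (sLast n c) = TT n c := by
  unfold sLast
  rw [φ_s]
  have h : ¬ (((⟨c + 1, by omega⟩ : Fin (c+2)) : ℕ) ≤ c) := by simp
  simp [φf, h]

/-! ### The wreath-type representation `Ψ : G² → (ZMod (c+1) → G^(c+2)) ⋊ Perm (ZMod (c+1))` -/

abbrev VV := ZMod (c + 1) → GBSOneN (c + 2) n

def permAut : Equiv.Perm (ZMod (c + 1)) →* MulAut (VV n c) where
  toFun σ :=
    { toFun := fun f i => f (σ⁻¹ i)
      invFun := fun f i => f (σ i)
      left_inv := fun f => by funext i; simp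
      right_inv := fun f => by funext i; simp
      map_mul' := fun f g => rfl }
  map_one' := by
    apply MulEquiv.ext
    intro f
    funext i
    simp
  map_mul' := fun σ τ => by
    apply MulEquiv.ext
    intro f
    funext i
    simp [mul_inv_rev]

lemma permAut_apply (σ : Equiv.Perm (ZMod (c + 1))) (f : VV n c) (i : ZMod (c + 1)) :
    permAut n c σ f i = f (σ⁻¹ i) := rfl

lemma permAut_cancel (σ : Equiv.Perm (ZMod (c + 1))) (f : VV n c) :
    permAut n c σ (permAut n c σ⁻¹ f) = f := by
  funext i
  rw [permAut_apply, permAut_apply]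
  simp

abbrev WW := SemidirectProduct (VV n c) (Equiv.Perm (ZMod (c + 1))) (permAut n c)

open SemidirectProduct

lemma sd_conj (x : WW n c) (g : VV n c) :
    x * SemidirectProduct.inl g * x⁻¹
      = SemidirectProduct.inl (x.left * permAut n c x.right g * x.left⁻¹) := by
  have hl : (x * SemidirectProduct.inl g * x⁻¹).left
      = x.left * permAut n c x.right g * x.left⁻¹ := by
    simp only [mul_left, mul_right, inv_left, inv_right, left_inl, right_inl, mul_one]
    rw [permAut_cancel]
  have hr : (x * SemidirectProduct.inl g * x⁻¹).right = 1 := by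
    simp only [mul_right, right_inl, mul_one]
    simp
  ext
  · rw [hl, left_inl]
  · rw [hr, right_inl]

lemma sd_conj' (x : WW n c) (g : VV n c) :
    x⁻¹ * SemidirectProduct.inl g * x
      = SemidirectProduct.inl (permAut n c x.right⁻¹ (x.left⁻¹ * g * x.left)) := by
  have h := sd_conj n c x⁻¹ g
  rw [inv_inv] at h
  rw [h]
  congr 1
  simp only [inv_left, inv_right, map_mul, map_inv, inv_inv]

def AA : VV n c := fun i => bK n c ^ n ^ (c - i.val)

def UU : VV n c := fun i =>
  (sTop n c ^ (c - i.val))⁻¹ * sK n c ⟨i.val, by have := ZMod.val_lt i; omega⟩ *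
    sTop n c ^ (c - i.val)

def TF : VV n c := fun i => if i.val = c then sLast n c * sTop n c ^ c else 1

def δp : Equiv.Perm (ZMod (c + 1)) := Equiv.subRight (1 : ZMod (c + 1))

def Ψf : Option (Fin 2) → WW n c
  | none => SemidirectProduct.inl (AA n c)
  | some j => if j = 0 then ⟨TF n c, δp c⟩ else SemidirectProduct.inl (UU n c)

/-! ### Pointwise relation checks for `Ψ` -/

lemma key_t (i : ZMod (c + 1)) :
    (TF n c (i - 1))⁻¹ * AA n c (i - 1) * TF n c (i - 1) = AA n c i ^ n := by
  by_cases h0 : i = 0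
  · subst h0
    have h1 : (0 : ZMod (c + 1)) - 1 = -1 := zero_sub 1
    have hv : (-1 : ZMod (c + 1)).val = c := ZMod.val_neg_one c
    have hTF : TF n c (-1) = sLast n c * sTop n c ^ c := by
      simp only [TF, hv, if_pos]
    have hAA : AA n c (-1) = bK n c := by
      simp [AA, hv]
    have hA0 : AA n c 0 = bK n c ^ n ^ c := by
      simp [AA]
    rw [h1, hTF, hAA, hA0]
    have hstep : (sLast n c * sTop n c ^ c)⁻¹ * bK n c * (sLast n c * sTop n c ^ c)
        = (sTop n c ^ c)⁻¹ * ((sLast n c)⁻¹ * bK n c * sLast n c) * sTop n c ^ c := by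
      group
    rw [hstep, rel_sLast]
    have h2 := tower_up (rel_sTop n c) c n
    rw [h2]
    try rw [← pow_mul]
  · set v := i.val with hvdef
    have hv1 : v ≠ 0 := fun h => h0 ((ZMod.val_eq_zero i).mp h)
    have hvlt : v < c + 1 := ZMod.val_lt i
    have hi : (v : ZMod (c + 1)) = i := ZMod.natCast_zmod_val i
    have hsub : i - 1 = ((v - 1 : ℕ) : ZMod (c + 1)) := by
      rw [← hi, Nat.cast_sub (by omega), Nat.cast_one]
    have hvv : ((v - 1 : ℕ) : ZMod (c + 1)).val = v - 1 := ZMod.val_cast_of_lt (by omega)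
    have hTF : TF n c (i - 1) = 1 := by
      rw [hsub]
      simp only [TF, hvv]
      rw [if_neg (by omega)]
    have hAA' : AA n c (i - 1) = bK n c ^ n ^ (c - (v - 1)) := by
      rw [hsub]
      simp only [AA, hvv]
    have hAAi : AA n c i = bK n c ^ n ^ (c - v) := rfl
    rw [hTF, hAA', hAAi]
    simp only [one_mul, mul_one, inv_one]
    rw [← pow_mul]
    congr 1
    rw [show c - (v - 1) = (c - v) + 1 by omega, pow_succ]

lemma key_u (i : ZMod (c + 1)) :
    (UU n c i)⁻¹ * AA n c i * UU n c i = AA n c i ^ n := by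
  set j : Fin (c + 2) := ⟨i.val, by have := ZMod.val_lt i; omega⟩ with hj
  set m := c - i.val with hm
  have hU : UU n c i = (sTop n c ^ m)⁻¹ * sK n c j * sTop n c ^ m := rfl
  have hA : AA n c i = bK n c ^ n ^ m := rfl
  have h1 : (UU n c i)⁻¹ * AA n c i * UU n c i
      = (sTop n c ^ m)⁻¹ * ((sK n c j)⁻¹ *
          (sTop n c ^ m * bK n c ^ n ^ m * (sTop n c ^ m)⁻¹) * sK n c j) * sTop n c ^ m := by
    rw [hU, hA]; group
  rw [h1, tower_down' (rel_sTop n c) m, rel_sK, tower_up (rel_sTop n c) m n, hA, ← pow_mul]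

lemma sd_conj_mk (f : VV n c) (σ : Equiv.Perm (ZMod (c + 1))) (g : VV n c) :
    (⟨f, σ⟩ : WW n c)⁻¹ * SemidirectProduct.inl g * ⟨f, σ⟩
      = SemidirectProduct.inl (fun i => (f⁻¹ * g * f) (σ i)) := by
  rw [sd_conj']
  congr 1

lemma Ψ_rels : ∀ r ∈ GBSRels 2 (fun _ => (1 : ℤ)) (fun _ => ((n : ℕ) : ℤ)),
    FreeGroup.lift (Ψf n c) r = 1 := by
  intro r hr
  rw [GBSRels, Set.mem_iUnion] at hr
  obtain ⟨j, hj⟩ := hr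
  rw [Set.mem_singleton_iff] at hj
  subst hj
  simp only [map_mul, map_inv, map_zpow, map_pow, FreeGroup.lift_apply_of, zpow_one, zpow_natCast]
  have hnone : Ψf n c none = SemidirectProduct.inl (AA n c) := rfl
  rw [hnone, ← map_pow, mul_inv_eq_one]
  by_cases hj0 : j = 0
  · subst hj0
    rw [show Ψf n c (some 0) = (⟨TF n c, δp c⟩ : WW n c) from rfl, sd_conj_mk,
      SemidirectProduct.inl_inj]
    funext i
    simp only [Pi.mul_apply, Pi.inv_apply, Pi.pow_apply]
    rw [show δp c i = i - 1 from Equiv.subRight_apply _ _]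
    exact key_t n c i
  · have hj1 : j = 1 := by
      apply Fin.ext
      have h2 := j.isLt
      have h0 : j.val ≠ 0 := fun h => hj0 (Fin.ext h)
      simp only [Fin.val_one]
      omega
    subst hj1
    rw [show Ψf n c (some 1) = SemidirectProduct.inl (UU n c) from rfl,
      ← map_inv, ← map_mul, ← map_mul, SemidirectProduct.inl_inj]
    funext i
    simp only [Pi.mul_apply, Pi.inv_apply, Pi.pow_apply]
    exact key_u n c i

def Ψh : GBSOneN 2 n →* WW n c := PresentedGroup.toGroup (Ψ_rels n c)

lemma Ψ_t : Ψh n c (tG n) = ⟨TF n c, δp c⟩ := PresentedGroup.toGroup.of _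

lemma Ψ_u : Ψh n c (uG n) = SemidirectProduct.inl (UU n c) := PresentedGroup.toGroup.of _

lemma Ψ_a : Ψh n c (aG n) = SemidirectProduct.inl (AA n c) := PresentedGroup.toGroup.of _

/-! ### Powers of the permutation `δp` -/

lemma δp_pow_apply (m : ℕ) : ∀ x : ZMod (c + 1), (δp c ^ m) x = x - (m : ZMod (c + 1)) := by
  induction m with
  | zero => intro x; simp
  | succ m ih =>
      intro x
      rw [pow_succ, Equiv.Perm.mul_apply,
        show δp c x = x - 1 from Equiv.subRight_apply _ _, ih]
      push_cast
      ring

lemma δp_pow_inv_zero (m : ℕ) :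
    ((δp c ^ m)⁻¹ : Equiv.Perm (ZMod (c + 1))) 0 = (m : ZMod (c + 1)) := by
  have h : (δp c ^ m) ((m : ZMod (c + 1))) = 0 := by rw [δp_pow_apply]; simp
  calc ((δp c ^ m)⁻¹) 0 = ((δp c ^ m)⁻¹) ((δp c ^ m) ((m : ZMod (c + 1)))) := by rw [h]
    _ = (m : ZMod (c + 1)) := by simp

lemma δp_pow_top : δp c ^ (c + 1) = 1 := by
  apply Equiv.ext
  intro x
  rw [δp_pow_apply]
  simp [ZMod.natCast_self]

/-! ### `left _ 0` calculus on `WW` -/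

def lz (x : WW n c) : GBSOneN (c + 2) n := x.left 0

lemma lz_inl (g : VV n c) : lz n c (SemidirectProduct.inl g) = g 0 := rfl

lemma lz_one : lz n c 1 = 1 := rfl

lemma lz_mul (x y : WW n c) (hx : x.right = 1) : lz n c (x * y) = lz n c x * lz n c y := by
  unfold lz
  rw [SemidirectProduct.mul_left, hx, map_one]
  simp

lemma lz_inv (x : WW n c) (hx : x.right = 1) : lz n c x⁻¹ = (lz n c x)⁻¹ := by
  unfold lz
  rw [SemidirectProduct.inv_left, hx, inv_one, map_one]
  simp

lemma right_pow (x : WW n c) (hx : x.right = 1) (m : ℕ) : (x ^ m).right = 1 := by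
  have h1 : (x ^ m).right = SemidirectProduct.rightHom (x ^ m) := rfl
  rw [h1, map_pow, show SemidirectProduct.rightHom x = x.right from rfl, hx, one_pow]

lemma lz_pow (x : WW n c) (hx : x.right = 1) (m : ℕ) : lz n c (x ^ m) = lz n c x ^ m := by
  induction m with
  | zero => rw [pow_zero, pow_zero, lz_one]
  | succ m ih => rw [pow_succ, lz_mul n c _ _ (right_pow n c x hx m), ih, pow_succ]

/-! ### Computing `Ψ` on the distinguished elements of `G²` -/

lemma Ψt_right : (Ψh n c (tG n)).right = δp c := by rw [Ψ_t]

lemma Ψt_pow_right (m : ℕ) : (Ψh n c (tG n) ^ m).right = δp c ^ m := by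
  have h1 : (Ψh n c (tG n) ^ m).right = SemidirectProduct.rightHom (Ψh n c (tG n) ^ m) := rfl
  rw [h1, map_pow, show SemidirectProduct.rightHom (Ψh n c (tG n)) = (Ψh n c (tG n)).right
    from rfl, Ψt_right]

lemma Ψt_left : (Ψh n c (tG n)).left = TF n c := by rw [Ψ_t]

lemma Ψt_pow_left0 : ∀ m, m ≤ c → lz n c (Ψh n c (tG n) ^ m) = 1 := by
  intro m
  induction m with
  | zero => intro _; rw [pow_zero, lz_one]
  | succ m ih =>
      intro hm
      have hm' : m ≤ c := by omega
      rw [pow_succ]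
      unfold lz
      rw [SemidirectProduct.mul_left, Pi.mul_apply, Ψt_pow_right, permAut_apply,
        δp_pow_inv_zero, Ψt_left,
        show (Ψh n c (tG n) ^ m).left 0 = 1 from ih hm', one_mul]
      have hval : ((m : ZMod (c + 1))).val = m := ZMod.val_cast_of_lt (by omega)
      simp only [TF, hval]
      rw [if_neg (by omega)]

lemma Ψt_pow_top_right : (Ψh n c (tG n) ^ (c + 1)).right = 1 := by
  rw [Ψt_pow_right, δp_pow_top]

lemma Ψt_pow_top_left0 : lz n c (Ψh n c (tG n) ^ (c + 1)) = sLast n c * sTop n c ^ c := by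
  unfold lz
  rw [pow_succ, SemidirectProduct.mul_left, Pi.mul_apply, Ψt_pow_right, permAut_apply,
    δp_pow_inv_zero, Ψt_left,
    show (Ψh n c (tG n) ^ c).left 0 = 1 from Ψt_pow_left0 n c c le_rfl, one_mul]
  have hval : ((c : ZMod (c + 1))).val = c := ZMod.val_cast_of_lt (by omega)
  simp only [TF, hval, if_pos]

lemma Ψ_BG : Ψh n c (BG n c) = SemidirectProduct.inl
    ((Ψh n c (tG n) ^ c).left * permAut n c (δp c ^ c) (AA n c) *
      ((Ψh n c (tG n) ^ c).left)⁻¹) := by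
  have h1 : BG n c = tG n ^ c * aG n * (tG n ^ c)⁻¹ := rfl
  rw [h1, map_mul, map_mul, map_inv, map_pow, Ψ_a, sd_conj, Ψt_pow_right]

lemma Ψ_BG_right : (Ψh n c (BG n c)).right = 1 := by
  rw [Ψ_BG]; exact SemidirectProduct.right_inl _

lemma Ψ_BG_left0 : lz n c (Ψh n c (BG n c)) = bK n c := by
  rw [Ψ_BG, lz_inl, Pi.mul_apply, Pi.mul_apply, Pi.inv_apply,
    show (Ψh n c (tG n) ^ c).left 0 = 1 from Ψt_pow_left0 n c c le_rfl,
    permAut_apply, δp_pow_inv_zero]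
  have hval : ((c : ZMod (c + 1))).val = c := ZMod.val_cast_of_lt (by omega)
  simp only [AA, hval, Nat.sub_self, pow_zero, pow_one, one_mul, inv_one, mul_one]

lemma Ψ_uu_eq (i : ℕ) : Ψh n c (uu n i) = SemidirectProduct.inl
    ((Ψh n c (tG n) ^ i).left * permAut n c (δp c ^ i) (UU n c) *
      ((Ψh n c (tG n) ^ i).left)⁻¹) := by
  have h1 : uu n i = tG n ^ i * uG n * (tG n ^ i)⁻¹ := rfl
  rw [h1, map_mul, map_mul, map_inv, map_pow, Ψ_u, sd_conj, Ψt_pow_right]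

lemma Ψ_uu_right (i : ℕ) : (Ψh n c (uu n i)).right = 1 := by
  rw [Ψ_uu_eq]; exact SemidirectProduct.right_inl _

lemma Ψ_uu_left0 (i : ℕ) (hi : i ≤ c) :
    lz n c (Ψh n c (uu n i))
      = (sTop n c ^ (c - i))⁻¹ * sK n c ⟨i, by omega⟩ * sTop n c ^ (c - i) := by
  rw [Ψ_uu_eq, lz_inl, Pi.mul_apply, Pi.mul_apply, Pi.inv_apply,
    show (Ψh n c (tG n) ^ i).left 0 = 1 from Ψt_pow_left0 n c i hi,
    permAut_apply, δp_pow_inv_zero]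
  have hval : ((i : ZMod (c + 1))).val = i := ZMod.val_cast_of_lt (by omega)
  simp only [UU, hval, one_mul, inv_one, mul_one]

lemma Ψ_σ_right : (Ψh n c (σG n c)).right = 1 := Ψ_uu_right n c c

lemma Ψ_σ_left0 : lz n c (Ψh n c (σG n c)) = sTop n c := by
  have h := Ψ_uu_left0 n c c le_rfl
  simp only [Nat.sub_self, pow_zero, inv_one, one_mul, mul_one] at h
  exact h

lemma Ψ_SS_right (i : ℕ) (hi : i ≤ c) : (Ψh n c (SS n c i)).right = 1 := by
  have h1 : SS n c i = σG n c ^ (c - i) * uu n i * (σG n c ^ (c - i))⁻¹ := rfl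
  rw [h1, map_mul, map_mul, map_inv, map_pow, SemidirectProduct.mul_right,
    SemidirectProduct.mul_right, SemidirectProduct.inv_right,
    right_pow n c _ (Ψ_σ_right n c), Ψ_uu_right]
  simp

lemma Ψ_SS_left0 (i : ℕ) (hi : i ≤ c) :
    lz n c (Ψh n c (SS n c i)) = sK n c ⟨i, by omega⟩ := by
  have h1 : SS n c i = σG n c ^ (c - i) * uu n i * (σG n c ^ (c - i))⁻¹ := rfl
  have hσr : (Ψh n c (σG n c) ^ (c - i)).right = 1 := right_pow n c _ (Ψ_σ_right n c) _
  have hmulr : (Ψh n c (σG n c) ^ (c - i) * Ψh n c (uu n i)).right = 1 := by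
    rw [SemidirectProduct.mul_right, hσr, Ψ_uu_right, one_mul]
  rw [h1, map_mul, map_mul, map_inv, map_pow, lz_mul n c _ _ hmulr, lz_mul n c _ _ hσr,
    lz_inv n c _ hσr, lz_pow n c _ (Ψ_σ_right n c), Ψ_σ_left0, Ψ_uu_left0 n c i hi]
  group

lemma Ψ_TT_right : (Ψh n c (TT n c)).right = 1 := by
  have h1 : TT n c = tG n ^ (c + 1) * (σG n c ^ c)⁻¹ := rfl
  rw [h1, map_mul, map_inv, map_pow, map_pow, SemidirectProduct.mul_right,
    SemidirectProduct.inv_right, Ψt_pow_top_right, right_pow n c _ (Ψ_σ_right n c)]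
  simp

lemma Ψ_TT_left0 : lz n c (Ψh n c (TT n c)) = sLast n c := by
  have h1 : TT n c = tG n ^ (c + 1) * (σG n c ^ c)⁻¹ := rfl
  have hσr : (Ψh n c (σG n c) ^ c).right = 1 := right_pow n c _ (Ψ_σ_right n c) _
  rw [h1, map_mul, map_inv, map_pow, map_pow, lz_mul n c _ _ (Ψt_pow_top_right n c),
    lz_inv n c _ hσr, lz_pow n c _ (Ψ_σ_right n c), Ψ_σ_left0, Ψt_pow_top_left0]
  group

/-! ### Injectivity of `φ` -/

def DD : Subgroup (GBSOneN (c + 2) n) where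
  carrier := {g | (Ψh n c (φH n c g)).right = 1 ∧ lz n c (Ψh n c (φH n c g)) = g}
  one_mem' := by
    constructor
    · rw [map_one, map_one]; rfl
    · rw [map_one, map_one, lz_one]
  mul_mem' := by
    intro g h hg hh
    constructor
    · rw [map_mul, map_mul, SemidirectProduct.mul_right, hg.1, hh.1, one_mul]
    · rw [map_mul, map_mul, lz_mul n c _ _ hg.1, hg.2, hh.2]
  inv_mem' := by
    intro g hg
    constructor
    · rw [map_inv, map_inv, SemidirectProduct.inv_right, hg.1, inv_one]
    · rw [map_inv, map_inv, lz_inv n c _ hg.1, hg.2]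

lemma DD_all : ∀ g, g ∈ DD n c := by
  apply PresentedGroup.generated_by
  intro j
  cases j with
  | none =>
      constructor
      · show (Ψh n c (φH n c (bK n c))).right = 1
        rw [φ_b]; exact Ψ_BG_right n c
      · show lz n c (Ψh n c (φH n c (bK n c))) = bK n c
        rw [φ_b]; exact Ψ_BG_left0 n c
  | some j =>
      by_cases hj : (j : ℕ) ≤ c
      · constructor
        · show (Ψh n c (φH n c (sK n c j))).right = 1
          rw [φ_s_le n c j hj]; exact Ψ_SS_right n c j hj
        · show lz n c (Ψh n c (φH n c (sK n c j))) = sK n c j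
          rw [φ_s_le n c j hj, Ψ_SS_left0 n c j hj]
      · have hφ : φH n c (sK n c j) = TT n c := by
          rw [φ_s]; simp [φf, hj]
        have hj1 : (j : ℕ) = c + 1 := by have := j.isLt; omega
        constructor
        · show (Ψh n c (φH n c (sK n c j))).right = 1
          rw [hφ]; exact Ψ_TT_right n c
        · show lz n c (Ψh n c (φH n c (sK n c j))) = sK n c j
          rw [hφ, Ψ_TT_left0]
          show sK n c _ = sK n c j
          congr 1
          exact Fin.ext hj1.symm

lemma φ_inj : Function.Injective (φH n c) := by
  rw [injective_iff_map_eq_one]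
  intro g hg
  have h := (DD_all n c g).2
  rw [hg, map_one] at h
  rw [← h, lz_one]

/-! ### The homomorphism `π : G² → Multiplicative (ZMod (c+1))` -/

def πf : Option (Fin 2) → Multiplicative (ZMod (c + 1))
  | none => 1
  | some j => if j = 0 then Multiplicative.ofAdd (1 : ZMod (c + 1)) else 1

lemma π_rels : ∀ r ∈ GBSRels 2 (fun _ => (1 : ℤ)) (fun _ => ((n : ℕ) : ℤ)),
    FreeGroup.lift (πf c) r = 1 := by
  intro r hr
  rw [GBSRels, Set.mem_iUnion] at hr
  obtain ⟨j, hj⟩ := hr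
  rw [Set.mem_singleton_iff] at hj
  subst hj
  simp only [map_mul, map_inv, map_zpow, map_pow, FreeGroup.lift_apply_of, zpow_one, zpow_natCast]
  rw [show πf c none = 1 from rfl]
  group

def πh : GBSOneN 2 n →* Multiplicative (ZMod (c + 1)) := PresentedGroup.toGroup (π_rels n c)

lemma π_t : πh n c (tG n) = Multiplicative.ofAdd (1 : ZMod (c + 1)) :=
  PresentedGroup.toGroup.of _

lemma π_u : πh n c (uG n) = 1 := PresentedGroup.toGroup.of _

lemma π_a : πh n c (aG n) = 1 := PresentedGroup.toGroup.of _

lemma π_uu (i : ℕ) : πh n c (uu n i) = 1 := by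
  have h1 : uu n i = tG n ^ i * uG n * (tG n ^ i)⁻¹ := rfl
  rw [h1, map_mul, map_mul, map_inv, map_pow, π_u]
  group

lemma π_σ : πh n c (σG n c) = 1 := π_uu n c c

lemma π_BG : πh n c (BG n c) = 1 := by
  have h1 : BG n c = tG n ^ c * aG n * (tG n ^ c)⁻¹ := rfl
  rw [h1, map_mul, map_mul, map_inv, map_pow, π_a]
  group

lemma π_SS (i : ℕ) : πh n c (SS n c i) = 1 := by
  have h1 : SS n c i = σG n c ^ (c - i) * uu n i * (σG n c ^ (c - i))⁻¹ := rfl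
  rw [h1, map_mul, map_mul, map_inv, map_pow, π_σ, π_uu]
  group

lemma ofAdd_one_pow (m : ℕ) :
    (Multiplicative.ofAdd (1 : ZMod (c + 1))) ^ m
      = Multiplicative.ofAdd ((m : ZMod (c + 1))) := by
  rw [← ofAdd_nsmul]
  congr 1
  simp [nsmul_eq_mul]

lemma π_tpow : πh n c (tG n ^ (c + 1)) = 1 := by
  rw [map_pow, π_t, ofAdd_one_pow]
  rw [show (((c + 1 : ℕ)) : ZMod (c + 1)) = 0 from ZMod.natCast_self _]
  rfl

lemma π_TT : πh n c (TT n c) = 1 := by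
  have h1 : TT n c = tG n ^ (c + 1) * (σG n c ^ c)⁻¹ := rfl
  rw [h1, map_mul, map_inv, π_tpow, map_pow, π_σ]
  group

lemma π_range : ∀ g : GBSOneN (c + 2) n, πh n c (φH n c g) = 1 := by
  have key : ∀ g, g ∈ ((πh n c).comp (φH n c)).ker := by
    apply PresentedGroup.generated_by
    intro j
    cases j with
    | none =>
        show πh n c (φH n c (bK n c)) = 1
        rw [φ_b]; exact π_BG n c
    | some j =>
        by_cases hj : (j : ℕ) ≤ c
        · show πh n c (φH n c (sK n c j)) = 1
          rw [φ_s_le n c j hj]; exact π_SS n c j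
        · show πh n c (φH n c (sK n c j)) = 1
          have hφ : φH n c (sK n c j) = TT n c := by rw [φ_s]; simp [φf, hj]
          rw [hφ]; exact π_TT n c
  intro g
  exact key g

/-! ### The range of `φ` and its cosets -/

def RR : Subgroup (GBSOneN 2 n) := (φH n c).range

lemma mem_B : BG n c ∈ RR n c := ⟨bK n c, φ_b n c⟩

lemma mem_SS (i : ℕ) (hi : i ≤ c) : SS n c i ∈ RR n c :=
  ⟨sK n c ⟨i, by omega⟩, by rw [φ_s_le n c ⟨i, by omega⟩ (by simpa using hi)]⟩

lemma mem_σ : σG n c ∈ RR n c := ⟨sTop n c, φ_sTop n c⟩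

lemma mem_TT : TT n c ∈ RR n c := ⟨sLast n c, φ_sLast n c⟩

lemma mem_uu (i : ℕ) (hi : i ≤ c) : uu n i ∈ RR n c := by
  have h1 : uu n i = (σG n c ^ (c - i))⁻¹ * SS n c i * σG n c ^ (c - i) := by
    rw [SS]; group
  rw [h1]
  exact Subgroup.mul_mem _
    (Subgroup.mul_mem _
      (Subgroup.inv_mem _ (Subgroup.pow_mem _ (mem_σ n c) _)) (mem_SS n c i hi))
    (Subgroup.pow_mem _ (mem_σ n c) _)

lemma mem_tpow : tG n ^ (c + 1) ∈ RR n c := by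
  have h1 : tG n ^ (c + 1) = TT n c * σG n c ^ c := by rw [TT]; group
  rw [h1]
  exact Subgroup.mul_mem _ (mem_TT n c) (Subgroup.pow_mem _ (mem_σ n c) _)

lemma mem_conj_a (i : ℕ) (hi : i ≤ c) : tG n ^ i * aG n * (tG n ^ i)⁻¹ ∈ RR n c := by
  have h1 : tG n ^ i * aG n * (tG n ^ i)⁻¹ = BG n c ^ n ^ (c - i) := by
    rw [Bpow n c (c - i) (by omega), Nat.sub_sub_self hi]
  rw [h1]
  exact Subgroup.pow_mem _ (mem_B n c) _

def PP : Subgroup (GBSOneN 2 n) where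
  carrier := {g | ∀ i : Fin (c + 1), ∃ j : Fin (c + 1), ∃ h ∈ RR n c,
    tG n ^ (i : ℕ) * g = h * tG n ^ (j : ℕ)}
  one_mem' := by
    intro i
    exact ⟨i, 1, Subgroup.one_mem _, by group⟩
  mul_mem' := by
    intro g g' hg hg' i
    obtain ⟨j, h, hh, heq⟩ := hg i
    obtain ⟨j', h', hh', heq'⟩ := hg' j
    refine ⟨j', h * h', Subgroup.mul_mem _ hh hh', ?_⟩
    calc tG n ^ (i : ℕ) * (g * g') = (tG n ^ (i : ℕ) * g) * g' := by group
      _ = h * (tG n ^ (j : ℕ) * g') := by rw [heq]; group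
      _ = h * (h' * tG n ^ (j' : ℕ)) := by rw [heq']
      _ = h * h' * tG n ^ (j' : ℕ) := by group
  inv_mem' := by
    intro g hg
    choose jf hfun hmem heq using hg
    have hinj : Function.Injective jf := by
      intro i1 i2 h12
      have e1 := heq i1
      have e2 := heq i2
      rw [h12] at e1
      have e3 : tG n ^ (i1 : ℕ) * (tG n ^ (i2 : ℕ))⁻¹ = hfun i1 * (hfun i2)⁻¹ := by
        calc tG n ^ (i1 : ℕ) * (tG n ^ (i2 : ℕ))⁻¹
            = (tG n ^ (i1 : ℕ) * g) * (tG n ^ (i2 : ℕ) * g)⁻¹ := by group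
          _ = (hfun i1 * tG n ^ ((jf i2 : ℕ))) * (hfun i2 * tG n ^ ((jf i2 : ℕ)))⁻¹ := by
              rw [e1, e2]
          _ = hfun i1 * (hfun i2)⁻¹ := by group
      have hπ : πh n c (tG n ^ (i1 : ℕ) * (tG n ^ (i2 : ℕ))⁻¹) = 1 := by
        rw [e3, map_mul, map_inv]
        obtain ⟨g1, hg1⟩ := hmem i1
        obtain ⟨g2, hg2⟩ := hmem i2
        rw [← hg1, ← hg2, π_range, π_range]
        group
      rw [map_mul, map_inv, map_pow, map_pow, π_t, ofAdd_one_pow, ofAdd_one_pow,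
        mul_inv_eq_one] at hπ
      have hcast : (((i1 : ℕ)) : ZMod (c + 1)) = (((i2 : ℕ)) : ZMod (c + 1)) :=
        Multiplicative.ofAdd.injective hπ
      apply Fin.ext
      have hv1 : (((i1 : ℕ)) : ZMod (c + 1)).val = (i1 : ℕ) := ZMod.val_cast_of_lt i1.isLt
      have hv2 : (((i2 : ℕ)) : ZMod (c + 1)).val = (i2 : ℕ) := ZMod.val_cast_of_lt i2.isLt
      rw [← hv1, ← hv2, hcast]
    have hsurj := Finite.injective_iff_surjective.mp hinj
    intro i
    obtain ⟨i0, hi0⟩ := hsurj i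
    have e := heq i0
    rw [hi0] at e
    refine ⟨i0, (hfun i0)⁻¹, Subgroup.inv_mem _ (hmem i0), ?_⟩
    calc tG n ^ (i : ℕ) * g⁻¹
        = (hfun i0)⁻¹ * (hfun i0 * tG n ^ (i : ℕ)) * g⁻¹ := by group
      _ = (hfun i0)⁻¹ * (tG n ^ ((i0 : ℕ)) * g) * g⁻¹ := by rw [e]
      _ = (hfun i0)⁻¹ * tG n ^ ((i0 : ℕ)) := by group

lemma PP_all : ∀ g, g ∈ PP n c := by
  apply PresentedGroup.generated_by
  intro x
  cases x with
  | none =>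
      intro i
      show ∃ j : Fin (c + 1), ∃ h ∈ RR n c, tG n ^ (i : ℕ) * aG n = h * tG n ^ (j : ℕ)
      refine ⟨i, tG n ^ (i : ℕ) * aG n * (tG n ^ (i : ℕ))⁻¹,
        mem_conj_a n c (i : ℕ) (by have := i.isLt; omega), ?_⟩
      group
  | some x =>
      by_cases hx : x = 0
      · subst hx
        intro i
        show ∃ j : Fin (c + 1), ∃ h ∈ RR n c, tG n ^ (i : ℕ) * tG n = h * tG n ^ (j : ℕ)
        by_cases hic : (i : ℕ) < c
        · refine ⟨⟨(i : ℕ) + 1, by omega⟩, 1, Subgroup.one_mem _, ?_⟩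
          rw [one_mul]
          show tG n ^ (i : ℕ) * tG n = tG n ^ ((i : ℕ) + 1)
          rw [pow_succ]
        · have hic' : (i : ℕ) = c := by have := i.isLt; omega
          refine ⟨⟨0, Nat.succ_pos c⟩, tG n ^ (c + 1), mem_tpow n c, ?_⟩
          rw [hic']
          show tG n ^ c * tG n = tG n ^ (c + 1) * tG n ^ (0 : ℕ)
          rw [pow_zero, mul_one, pow_succ]
      · have hx1 : x = 1 := by
          apply Fin.ext
          have h2 := x.isLt
          have h0 : x.val ≠ 0 := fun h => hx (Fin.ext h)
          simp only [Fin.val_one]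
          omega
        subst hx1
        intro i
        show ∃ j : Fin (c + 1), ∃ h ∈ RR n c, tG n ^ (i : ℕ) * uG n = h * tG n ^ (j : ℕ)
        refine ⟨i, uu n (i : ℕ), mem_uu n c (i : ℕ) (by have := i.isLt; omega), ?_⟩
        have h1 : uu n (i : ℕ) = tG n ^ (i : ℕ) * uG n * (tG n ^ (i : ℕ))⁻¹ := rfl
        rw [h1]
        group

lemma RR_finiteIndex : (RR n c).FiniteIndex := by
  have hsurj : Function.Surjective
      (fun j : Fin (c + 1) =>
        (QuotientGroup.mk ((tG n ^ (j : ℕ))⁻¹) : GBSOneN 2 n ⧸ RR n c)) := by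
    intro q
    obtain ⟨g, rfl⟩ := QuotientGroup.mk_surjective q
    obtain ⟨j, h, hh, heq⟩ := PP_all n c g⁻¹ ⟨0, by omega⟩
    refine ⟨j, ?_⟩
    have hg0 : g⁻¹ = h * tG n ^ (j : ℕ) := by
      rw [← heq]
      show g⁻¹ = tG n ^ ((0 : ℕ)) * g⁻¹
      rw [pow_zero, one_mul]
    have hg : g = (tG n ^ (j : ℕ))⁻¹ * h⁻¹ := by
      calc g = (g⁻¹)⁻¹ := by group
        _ = (h * tG n ^ (j : ℕ))⁻¹ := by rw [hg0]
        _ = (tG n ^ (j : ℕ))⁻¹ * h⁻¹ := by group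
    show _ = QuotientGroup.mk g
    rw [hg]
    exact (QuotientGroup.mk_mul_of_mem _ (Subgroup.inv_mem _ hh)).symm
  have hfin : Finite (GBSOneN 2 n ⧸ RR n c) := Finite.of_surjective _ hsurj
  exact (RR n c).finiteIndex_of_finite_quotient

theorem aux_main : ∃ H : Subgroup (GBSOneN 2 n), H.FiniteIndex ∧
    Nonempty (GBSOneN (c + 2) n ≃* H) :=
  ⟨RR n c, RR_finiteIndex n c, ⟨MonoidHom.ofInjective (φ_inj n c)⟩⟩

end Main

end GBSAux

theorem GBSOneN_embeds_finite_index (d n : ℕ) (hd : 2 ≤ d) (hn : 2 ≤ n) :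
    ∀ k : ℕ, 2 < k →
      ∃ H : Subgroup (GBSOneN 2 n), H.FiniteIndex ∧
        Nonempty (GBSOneN k n ≃* H) := by
  intro k hk
  obtain ⟨c, rfl⟩ : ∃ c, k = c + 2 := ⟨k - 2, by omega⟩
  exact GBSAux.aux_main n c
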